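/- arXiv:1610.04968 — 3 statements merged into one kernel-verified Lean document; each statement's English description precedes it below -/
import Mathlib

section
/- Let {X_n}_{n≥1} be independent mean-zero random variables with |X_n| ≤ 1 almost surely. For i ≥ 1 define μ_i = ∑_{2^{i−1} < n ≤ 2^i} (X_n/n) δ_n on ℤ. Then for every fixed i and x ≠ 0, E[ |μ̃_i * μ_i(x)|² ] ≤ C 2^{−3i}, where μ̃(y) = conj(μ(−y)) and C is absolute. -/
open MeasureTheory ProbabilityTheory

/-- The random measure `μ_i = ∑_{2^{i-1} < n ≤ 2^i} (X_n/n) δ_n` on `ℤ`. -/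
noncomputable def randMu {Ω : Type} (X : ℕ → Ω → ℝ) (i : ℕ) (ω : Ω) : ℤ → ℝ :=
  fun n => if 2 ^ (i - 1) < n ∧ n ≤ 2 ^ i then X n.toNat ω / (n : ℝ) else 0

/-- Convolution on `ℤ` (real-valued). -/
noncomputable def zconvR (g h : ℤ → ℝ) : ℤ → ℝ :=
  fun x => ∑' n : ℤ, g n * h (x - n)

/-- Reflection: `μ̃(x) = μ(-x)` (real-valued). -/
def zreflR (g : ℤ → ℝ) : ℤ → ℝ := fun x => g (-x)

section Aux

variable {Ω : Type} [MeasurableSpace Ω] {μ : Measure Ω} [IsProbabilityMeasure μ]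
  {X : ℕ → Ω → ℝ}

lemma integrable_of_abs_le_one {f : Ω → ℝ} (hm : Measurable f)
    (hb : ∀ᵐ ω ∂μ, |f ω| ≤ 1) : Integrable f μ :=
  ⟨hm.aestronglyMeasurable,
    HasFiniteIntegral.of_bounded (C := 1) (by simpa [Real.norm_eq_abs] using hb)⟩

lemma abs_mul_le_one {p q : ℝ} (hp : |p| ≤ 1) (hq : |q| ≤ 1) : |p * q| ≤ 1 := by
  rw [abs_mul]
  exact mul_le_one₀ hp (abs_nonneg _) hq

lemma integrable4 (hmeas : ∀ n, Measurable (X n)) (hbd : ∀ n, ∀ᵐ ω ∂μ, |X n ω| ≤ 1)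
    (a b c d : ℕ) : Integrable (fun ω => X a ω * X b ω * X c ω * X d ω) μ := by
  refine integrable_of_abs_le_one
    ((((hmeas a).mul (hmeas b)).mul (hmeas c)).mul (hmeas d)) ?_
  filter_upwards [hbd a, hbd b, hbd c, hbd d] with ω h1 h2 h3 h4
  exact abs_mul_le_one (abs_mul_le_one (abs_mul_le_one h1 h2) h3) h4

lemma integrable3 (hmeas : ∀ n, Measurable (X n)) (hbd : ∀ n, ∀ᵐ ω ∂μ, |X n ω| ≤ 1)
    (a b c : ℕ) : Integrable (fun ω => X a ω * X b ω * X c ω) μ := by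
  refine integrable_of_abs_le_one
    (((hmeas a).mul (hmeas b)).mul (hmeas c)) ?_
  filter_upwards [hbd a, hbd b, hbd c] with ω h1 h2 h3
  exact abs_mul_le_one (abs_mul_le_one h1 h2) h3

lemma lone_zero (hind : iIndepFun X μ)
    (hmeas : ∀ n, Measurable (X n)) (hmean : ∀ n, ∫ ω, X n ω ∂μ = 0)
    (hbd : ∀ n, ∀ᵐ ω ∂μ, |X n ω| ≤ 1) (a b c d : ℕ)
    (hda : d ≠ a) (hdb : d ≠ b) (hdc : d ≠ c) :
    ∫ ω, X a ω * X b ω * X c ω * X d ω ∂μ = 0 := by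
  classical
  have hdisj : Disjoint ({a, b, c} : Finset ℕ) ({d} : Finset ℕ) := by
    rw [Finset.disjoint_right]
    intro y hy
    simp only [Finset.mem_singleton] at hy
    subst hy
    simp [hda, hdb, hdc]
  have hIT := hind.indepFun_finset {a, b, c} {d} hdisj hmeas
  have ha : a ∈ ({a, b, c} : Finset ℕ) := by simp
  have hb' : b ∈ ({a, b, c} : Finset ℕ) := by simp
  have hc : c ∈ ({a, b, c} : Finset ℕ) := by simp
  have hI : IndepFun (fun ω => X a ω * X b ω * X c ω) (X d) μ := by
    exact hIT.comp
      (φ := fun v : (({a, b, c} : Finset ℕ) : Type) → ℝ => v ⟨a, ha⟩ * v ⟨b, hb'⟩ * v ⟨c, hc⟩)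
      (ψ := fun v : (({d} : Finset ℕ) : Type) → ℝ => v ⟨d, by simp⟩)
      (by fun_prop) (by fun_prop)
  have key := hI.integral_fun_mul_eq_mul_integral (integrable3 hmeas hbd a b c).aestronglyMeasurable
    (integrable_of_abs_le_one (hmeas d) (hbd d)).aestronglyMeasurable
  rw [hmean d, mul_zero] at key
  exact key

lemma cross_zero (hind : iIndepFun X μ)
    (hmeas : ∀ n, Measurable (X n)) (hmean : ∀ n, ∫ ω, X n ω ∂μ = 0)
    (hbd : ∀ n, ∀ᵐ ω ∂μ, |X n ω| ≤ 1) (a b c d : ℕ)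
    (hac : a ≠ c) (hbd2 : b ≠ d) (hcd : c ≠ d) (had_bc : ¬(a = d ∧ b = c)) :
    ∫ ω, X a ω * X b ω * X c ω * X d ω ∂μ = 0 := by
  by_cases hbc : b = c
  · have hda : d ≠ a := fun h => had_bc ⟨h.symm, hbc⟩
    exact lone_zero hind hmeas hmean hbd a b c d hda hbd2.symm hcd.symm
  · have hre : (fun ω => X a ω * X b ω * X c ω * X d ω)
        = fun ω => X a ω * X b ω * X d ω * X c ω := by
      funext ω; ring
    rw [show (∫ ω, X a ω * X b ω * X c ω * X d ω ∂μ)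
        = ∫ ω, X a ω * X b ω * X d ω * X c ω ∂μ by rw [hre]]
    exact lone_zero hind hmeas hmean hbd a b d c hac.symm (fun h => hbc h.symm) hcd

end Aux

/-- Second-moment bound for the random autocorrelation:
`E[|μ̃_i * μ_i(x)|²] ≤ C 2^{-3i}` for `x ≠ 0`. -/
theorem random_autocorrelation_variance :
    ∃ C : ℝ, 0 < C ∧
      ∀ (Ω : Type) (_ : MeasurableSpace Ω) (μ : Measure Ω), IsProbabilityMeasure μ →
      ∀ X : ℕ → Ω → ℝ,
        iIndepFun X μ →
        (∀ n, Measurable (X n)) →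
        (∀ n, ∫ ω, X n ω ∂μ = 0) →
        (∀ n, ∀ᵐ ω ∂μ, |X n ω| ≤ 1) →
        ∀ i : ℕ, 1 ≤ i → ∀ x : ℤ, x ≠ 0 →
          ∫ ω, (zconvR (zreflR (randMu X i ω)) (randMu X i ω) x) ^ 2 ∂μ
            ≤ C * (2 : ℝ) ^ (-(3 : ℝ) * i) := by
  classical
  refine ⟨8, by norm_num, ?_⟩
  intro Ω mΩ μ hprob X hind hmeas hmean hbd i hi x hx
  set s : Finset ℤ := (Finset.Ioc ((2:ℤ) ^ (i-1)) (2 ^ i)).filter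
    (fun m => 2 ^ (i-1) < x + m ∧ x + m ≤ 2 ^ i) with hs
  have hpow0 : (0:ℤ) < 2 ^ (i-1) := by positivity
  have hmem : ∀ m ∈ s, (2 ^ (i-1) < m ∧ m ≤ 2 ^ i) ∧ (2 ^ (i-1) < x + m ∧ x + m ≤ 2 ^ i) := by
    intro m hm
    rw [hs, Finset.mem_filter, Finset.mem_Ioc] at hm
    tauto
  -- the coefficient
  set c : ℤ → ℝ := fun m => (((m:ℝ)) * (((x + m : ℤ) : ℝ)))⁻¹ with hc
  -- Step A: the convolution is a finite sum
  have hconv : ∀ ω, zconvR (zreflR (randMu X i ω)) (randMu X i ω) x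
      = ∑ m ∈ s, c m * (X m.toNat ω * X (x + m).toNat ω) := by
    intro ω
    rw [zconvR, tsum_eq_sum (s := s.image (fun m => -m)) ?_]
    · rw [Finset.sum_image (fun a _ b _ h => by omega)]
      refine Finset.sum_congr rfl fun m hm => ?_
      obtain ⟨⟨h1, h2⟩, h3, h4⟩ := hmem m hm
      simp only [zreflR, randMu, neg_neg, sub_neg_eq_add]
      rw [if_pos ⟨h1, h2⟩, if_pos ⟨h3, h4⟩, hc]
      field_simp
    · intro n hn
      simp only [zreflR, randMu]
      by_contra hne
      rcases mul_ne_zero_iff.mp hne with ⟨h1, h2⟩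
      have c1 : 2 ^ (i-1) < -n ∧ -n ≤ 2 ^ i := by
        by_contra h; exact h1 (if_neg h)
      have c2 : 2 ^ (i-1) < x - n ∧ x - n ≤ 2 ^ i := by
        by_contra h; exact h2 (if_neg h)
      apply hn
      rw [Finset.mem_image]
      refine ⟨-n, ?_, by ring⟩
      rw [hs, Finset.mem_filter, Finset.mem_Ioc]
      refine ⟨⟨c1.1, c1.2⟩, by linarith [c2.1], by linarith [c2.2]⟩
  -- Step B: integral of the square as a double sum
  have hrw : ∀ ω, (zconvR (zreflR (randMu X i ω)) (randMu X i ω) x) ^ 2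
      = ∑ m ∈ s, ∑ m' ∈ s, (c m * c m') *
        (X m.toNat ω * X (x + m).toNat ω * X m'.toNat ω * X (x + m').toNat ω) := by
    intro ω
    rw [hconv ω, sq, Finset.sum_mul_sum]
    refine Finset.sum_congr rfl fun m _ => Finset.sum_congr rfl fun m' _ => ?_
    ring
  have hint : ∀ m m' : ℤ, Integrable (fun ω => (c m * c m') *
      (X m.toNat ω * X (x + m).toNat ω * X m'.toNat ω * X (x + m').toNat ω)) μ :=
    fun m m' => (integrable4 hmeas hbd _ _ _ _).const_mul _
  have step1 : ∫ ω, (zconvR (zreflR (randMu X i ω)) (randMu X i ω) x) ^ 2 ∂μ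
      = ∑ m ∈ s, ∑ m' ∈ s, (c m * c m') *
        ∫ ω, X m.toNat ω * X (x + m).toNat ω * X m'.toNat ω * X (x + m').toNat ω ∂μ := by
    rw [integral_congr_ae (Filter.Eventually.of_forall hrw)]
    rw [integral_finset_sum _ (fun m _ => integrable_finset_sum _ (fun m' _ => hint m m'))]
    refine Finset.sum_congr rfl fun m _ => ?_
    rw [integral_finset_sum _ (fun m' _ => hint m m')]
    exact Finset.sum_congr rfl fun m' _ => integral_const_mul _ _
  -- Step C: cross terms vanish
  have hcross : ∀ m ∈ s, ∀ m' ∈ s, m' ≠ m →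
      ∫ ω, X m.toNat ω * X (x + m).toNat ω * X m'.toNat ω * X (x + m').toNat ω ∂μ = 0 := by
    intro m hm m' hm' hne
    obtain ⟨⟨h1, _⟩, h3, _⟩ := hmem m hm
    obtain ⟨⟨h1', _⟩, h3', _⟩ := hmem m' hm'
    have pm : 0 < m := lt_trans hpow0 h1
    have pxm : 0 < x + m := lt_trans hpow0 h3
    have pm' : 0 < m' := lt_trans hpow0 h1'
    have pxm' : 0 < x + m' := lt_trans hpow0 h3'
    refine cross_zero hind hmeas hmean hbd _ _ _ _ ?_ ?_ ?_ ?_ <;> omega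
  -- collapse to diagonal
  have step2 : ∫ ω, (zconvR (zreflR (randMu X i ω)) (randMu X i ω) x) ^ 2 ∂μ
      = ∑ m ∈ s, (c m * c m) *
        ∫ ω, X m.toNat ω * X (x + m).toNat ω * X m.toNat ω * X (x + m).toNat ω ∂μ := by
    rw [step1]
    refine Finset.sum_congr rfl fun m hm => ?_
    exact Finset.sum_eq_single_of_mem m hm
      (fun m' hm' hne => by rw [hcross m hm m' hm' hne, mul_zero])
  -- Step D: bound the diagonal terms
  set B : ℝ := (((2:ℝ) ^ (i-1))⁻¹) ^ 4 with hB
  have hdiag : ∀ m ∈ s, (c m * c m) *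
      (∫ ω, X m.toNat ω * X (x + m).toNat ω * X m.toNat ω * X (x + m).toNat ω ∂μ) ≤ B := by
    intro m hm
    obtain ⟨⟨h1, _⟩, h3, _⟩ := hmem m hm
    have h1R : ((2:ℝ) ^ (i-1)) ≤ (m : ℝ) := by exact_mod_cast h1.le
    have h3R : ((2:ℝ) ^ (i-1)) ≤ (((x + m : ℤ)) : ℝ) := by exact_mod_cast h3.le
    have hp : (0:ℝ) < (2:ℝ) ^ (i-1) := by positivity
    have hprod : ((2:ℝ) ^ (i-1)) ^ 2 ≤ (m : ℝ) * (((x + m : ℤ)) : ℝ) := by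
      rw [sq]; exact mul_le_mul h1R h3R hp.le (le_trans hp.le h1R)
    have hcle : c m ≤ (((2:ℝ) ^ (i-1))⁻¹) ^ 2 := by
      rw [hc]
      calc ((m:ℝ) * (((x + m : ℤ)) : ℝ))⁻¹ ≤ (((2:ℝ) ^ (i-1)) ^ 2)⁻¹ :=
            inv_anti₀ (by positivity) hprod
        _ = (((2:ℝ) ^ (i-1))⁻¹) ^ 2 := (inv_pow _ _).symm
    have hc0 : 0 ≤ c m := by
      rw [hc]
      have : (0:ℝ) < (m : ℝ) * (((x + m : ℤ)) : ℝ) := lt_of_lt_of_le (by positivity) hprod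
      positivity
    have hEle : (∫ ω, X m.toNat ω * X (x + m).toNat ω * X m.toNat ω * X (x + m).toNat ω ∂μ)
        ≤ 1 := by
      have hone : (∫ (_ : Ω), (1:ℝ) ∂μ) = 1 := by simp
      rw [← hone]
      refine integral_mono_ae (integrable4 hmeas hbd _ _ _ _) (integrable_const 1) ?_
      filter_upwards [hbd m.toNat, hbd (x + m).toNat] with ω ha hb
      calc X m.toNat ω * X (x + m).toNat ω * X m.toNat ω * X (x + m).toNat ω
          ≤ |X m.toNat ω * X (x + m).toNat ω * X m.toNat ω * X (x + m).toNat ω| := le_abs_self _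
        _ ≤ 1 := abs_mul_le_one (abs_mul_le_one (abs_mul_le_one ha hb) ha) hb
    calc (c m * c m) * (∫ ω, X m.toNat ω * X (x + m).toNat ω * X m.toNat ω
          * X (x + m).toNat ω ∂μ)
        ≤ (c m * c m) * 1 := by
          exact mul_le_mul_of_nonneg_left hEle (mul_nonneg hc0 hc0)
      _ = c m * c m := mul_one _
      _ ≤ ((((2:ℝ) ^ (i-1))⁻¹) ^ 2) * ((((2:ℝ) ^ (i-1))⁻¹) ^ 2) :=
          mul_le_mul hcle hcle hc0 (by positivity)
      _ = B := by rw [hB]; ring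
  -- Step E: sum up
  have hcard : (s.card : ℝ) ≤ (2:ℝ) ^ (i-1) := by
    have h1 : s.card ≤ (Finset.Ioc ((2:ℤ) ^ (i-1)) (2 ^ i)).card :=
      Finset.card_le_card (by rw [hs]; exact Finset.filter_subset _ _)
    rw [Int.card_Ioc] at h1
    have h2 : ((2:ℤ) ^ i - 2 ^ (i-1)) = 2 ^ (i-1) := by
      have : (2:ℤ) ^ i = 2 ^ (i-1) * 2 := by
        rw [← pow_succ]; congr 1; omega
      rw [this]; ring
    rw [h2] at h1
    have h3 : ((2:ℤ) ^ (i-1)).toNat = 2 ^ (i-1) := by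
      rw [show ((2:ℤ) ^ (i-1)) = ((2 ^ (i-1) : ℕ) : ℤ) from by push_cast; ring,
        Int.toNat_natCast]
    rw [h3] at h1
    calc (s.card : ℝ) ≤ ((2 ^ (i-1) : ℕ) : ℝ) := by exact_mod_cast h1
      _ = (2:ℝ) ^ (i-1) := by push_cast; ring
  have hB0 : 0 ≤ B := by rw [hB]; positivity
  have hfinal : ((2:ℝ) ^ (i-1)) * B = 8 * (2 : ℝ) ^ (-(3 : ℝ) * i) := by
    have h2 : (2 : ℝ) ^ (-(3 : ℝ) * i) = ((2:ℝ) ^ (3 * i : ℕ))⁻¹ := by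
      rw [show (-(3:ℝ) * i) = -((3 * i : ℕ) : ℝ) from by push_cast; ring,
        Real.rpow_neg (by norm_num), Real.rpow_natCast]
    have hmain : (2:ℝ) ^ (i-1) * (2:ℝ) ^ (3*i) = 8 * (2:ℝ) ^ ((i-1)*4) := by
      rw [← pow_add, show (8:ℝ) = 2 ^ 3 from by norm_num, ← pow_add]
      congr 1
      omega
    rw [h2, hB, inv_pow, ← pow_mul]
    field_simp
    linarith [hmain]
  calc ∫ ω, (zconvR (zreflR (randMu X i ω)) (randMu X i ω) x) ^ 2 ∂μ
      = ∑ m ∈ s, (c m * c m) *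
        ∫ ω, X m.toNat ω * X (x + m).toNat ω * X m.toNat ω * X (x + m).toNat ω ∂μ := step2
    _ ≤ ∑ m ∈ s, B := Finset.sum_le_sum hdiag
    _ = (s.card : ℝ) * B := by rw [Finset.sum_const, nsmul_eq_mul]
    _ ≤ ((2:ℝ) ^ (i-1)) * B := mul_le_mul_of_nonneg_right hcard hB0
    _ = 8 * (2 : ℝ) ^ (-(3 : ℝ) * i) := hfinal
end

section
/- Let {X_n}_{n≥1} be independent mean-zero random variables with |X_n| ≤ 1 a.s., and μ_i = ∑_{2^{i−1} < n ≤ 2^i} (X_n/n) δ_n. Then almost surely there exists a (random) constant C_ω such that for all i ≥ 1 and all x ≠ 0, |μ̃_i * μ_i(x)| ≤ C_ω 2^{−5i/4}. -/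
open MeasureTheory ProbabilityTheory

/- ### Auxiliary definitions -/

/-- Index set of the autocorrelation sum. -/
def Ix (i x : ℕ) : Finset ℕ := (Finset.Ioc (2 ^ (i - 1)) (2 ^ i)).filter (fun m => m + x ≤ 2 ^ i)

/-- Color classes of the index set (pairs `(m, m+x)` within a class are disjoint). -/
def IxC (i x cl : ℕ) : Finset ℕ := (Ix i x).filter (fun m => m / x % 2 = cl)

/-- Coefficients of the autocorrelation sum. -/
noncomputable def coefR (x m : ℕ) : ℝ := 1 / ((m : ℝ) * ((m : ℝ) + (x : ℝ)))

/-- The part of the autocorrelation sum along one color class. -/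
noncomputable def Scl {Ω : Type} (X : ℕ → Ω → ℝ) (i x cl : ℕ) (ω : Ω) : ℝ :=
  ∑ m ∈ IxC i x cl, coefR x m * (X m ω * X (m + x) ω)

/-- Threshold. -/
noncomputable def thr (i : ℕ) : ℝ := (2 : ℝ) ^ (-(5 * (i : ℝ)) / 4) / 2

/-- Bad event at scale `i`. -/
def badSet {Ω : Type} (X : ℕ → Ω → ℝ) (i : ℕ) : Set Ω :=
  ⋃ x ∈ Finset.Icc 1 (2 ^ i), ⋃ cl ∈ Finset.range 2, {ω | thr i ≤ |Scl X i x cl ω|}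

/- ### Basic combinatorial facts -/

lemma IxC_mem {i x cl m : ℕ} (hm : m ∈ IxC i x cl) :
    2 ^ (i - 1) < m ∧ m ≤ 2 ^ i ∧ m + x ≤ 2 ^ i ∧ m / x % 2 = cl := by
  simp only [IxC, Ix, Finset.mem_filter, Finset.mem_Ioc] at hm
  tauto

lemma IxC_disjointPairs {i x cl : ℕ} (hx : 0 < x) :
    ∀ m ∈ IxC i x cl, ∀ m' ∈ IxC i x cl, m ≠ m' → m' ≠ m + x ∧ m ≠ m' + x := by
  intro m hm m' hm' _
  have h1 := (IxC_mem hm).2.2.2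
  have h2 := (IxC_mem hm').2.2.2
  constructor
  · rintro rfl
    rw [Nat.add_div_right m hx] at h2
    omega
  · rintro rfl
    rw [Nat.add_div_right m' hx] at h1
    omega

lemma Ix_split {i x : ℕ} (f : ℕ → ℝ) :
    ∑ m ∈ Ix i x, f m = (∑ m ∈ IxC i x 0, f m) + ∑ m ∈ IxC i x 1, f m := by
  classical
  have h1 : IxC i x 1 = (Ix i x).filter (fun m => ¬ (m / x % 2 = 0)) := by
    rw [IxC]
    apply Finset.filter_congr
    intro m _
    omega
  rw [IxC, h1, Finset.sum_filter_add_sum_filter_not]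

lemma Ix_card (i x : ℕ) (hi : 1 ≤ i) : (Ix i x).card ≤ 2 ^ (i - 1) := by
  have h1 : (Ix i x).card ≤ (Finset.Ioc (2 ^ (i - 1)) (2 ^ i)).card :=
    Finset.card_le_card (Finset.filter_subset _ _)
  rw [Nat.card_Ioc] at h1
  have h2 : 2 ^ i = 2 * 2 ^ (i - 1) := by
    conv_lhs => rw [show i = (i - 1) + 1 by omega]
    ring
  omega

lemma Ix_empty {i x : ℕ} (hx : 2 ^ i < x) : Ix i x = ∅ := by
  rw [Ix, Finset.filter_eq_empty_iff]
  intro m _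
  omega

lemma coefR_nonneg (x m : ℕ) : 0 ≤ coefR x m := by
  unfold coefR; positivity

lemma coefR_le_one {i x m : ℕ} (hm : 2 ^ (i - 1) < m) : coefR x m ≤ 1 := by
  have h1 : (1 : ℝ) ≤ (m : ℝ) := by
    have : 1 ≤ m := by have := Nat.one_le_two_pow (n := i - 1); omega
    exact_mod_cast this
  have h2 : (1 : ℝ) ≤ (m : ℝ) + (x : ℝ) := by
    have : (0:ℝ) ≤ (x:ℝ) := Nat.cast_nonneg x
    linarith
  rw [coefR, div_le_one (by nlinarith)]
  nlinarith
/- ### rpow facts and the variance bound -/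

lemma sum_sq_le (i x cl : ℕ) (hi : 1 ≤ i) :
    ∑ m ∈ IxC i x cl, (coefR x m) ^ 2 ≤ (2 : ℝ) ^ (3 - 3 * (i : ℝ)) := by
  have ha : ((i : ℝ) - 1) = ((i - 1 : ℕ) : ℝ) := by
    rw [Nat.cast_sub hi, Nat.cast_one]
  set P : ℝ := (2 : ℝ) ^ ((i : ℝ) - 1) with hP
  have hPpos : 0 < P := Real.rpow_pos_of_pos two_pos _
  have hPeq : P = ((2 ^ (i - 1) : ℕ) : ℝ) := by
    rw [hP, ha, Real.rpow_natCast]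
    push_cast
    ring
  have hterm : ∀ m ∈ IxC i x cl, (coefR x m) ^ 2 ≤ (P ^ 4)⁻¹ := by
    intro m hm
    obtain ⟨h1, -, -, -⟩ := IxC_mem hm
    have hmP : P ≤ (m : ℝ) := by
      rw [hPeq]
      exact_mod_cast le_of_lt h1
    have hxnn : (0:ℝ) ≤ (x:ℝ) := Nat.cast_nonneg x
    have hmxP : P ≤ (m : ℝ) + (x : ℝ) := by linarith
    have hcoef : coefR x m ≤ (P * P)⁻¹ := by
      rw [coefR, one_div]
      apply inv_anti₀ (by positivity)
      nlinarith
    have h0 : 0 ≤ coefR x m := coefR_nonneg x m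
    calc (coefR x m) ^ 2 ≤ ((P * P)⁻¹) ^ 2 := by nlinarith
      _ = (P ^ 4)⁻¹ := by
          rw [← inv_pow]
          ring
  calc ∑ m ∈ IxC i x cl, (coefR x m) ^ 2
      ≤ (IxC i x cl).card • (P ^ 4)⁻¹ := Finset.sum_le_card_nsmul _ _ _ hterm
    _ = ((IxC i x cl).card : ℝ) * (P ^ 4)⁻¹ := nsmul_eq_mul _ _
    _ ≤ P * (P ^ 4)⁻¹ := by
        apply mul_le_mul_of_nonneg_right _ (by positivity)
        rw [hPeq]
        have hcard : (IxC i x cl).card ≤ 2 ^ (i - 1) :=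
          le_trans (Finset.card_le_card (Finset.filter_subset _ _)) (Ix_card i x hi)
        exact_mod_cast hcard
    _ = (2 : ℝ) ^ (3 - 3 * (i : ℝ)) := by
        rw [hP, ← Real.rpow_natCast ((2:ℝ) ^ ((i:ℝ) - 1)) 4, ← Real.rpow_mul (by norm_num),
          ← Real.rpow_neg (by norm_num), ← Real.rpow_add two_pos]
        congr 1
        push_cast
        ring

lemma thr_pos (i : ℕ) : 0 < thr i := by
  rw [thr]
  positivity

lemma exp_ident (i : ℕ) :
    -(thr i ^ 2) / (2 * (2 : ℝ) ^ (3 - 3 * (i : ℝ))) = -((2 : ℝ) ^ ((i : ℝ) / 2) / 64) := by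
  have hsq : thr i ^ 2 = (2 : ℝ) ^ (-(5 * (i : ℝ)) / 2) / 4 := by
    rw [thr, div_pow, ← Real.rpow_natCast ((2:ℝ) ^ (-(5 * (i:ℝ)) / 4)) 2,
      ← Real.rpow_mul (by norm_num)]
    norm_num
    ring_nf
  rw [hsq]
  have hb : (0:ℝ) < (2:ℝ) ^ (3 - 3 * (i : ℝ)) := Real.rpow_pos_of_pos two_pos _
  rw [neg_div, neg_inj, div_div, div_eq_div_iff (by positivity) (by norm_num)]
  have hkey : (2:ℝ) ^ (-(5 * (i : ℝ)) / 2) * 64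
      = (2:ℝ) ^ ((i : ℝ) / 2 + (3 - 3 * (i : ℝ))) * 8 := by
    rw [show (64:ℝ) = 2 ^ (6:ℕ) by norm_num, show (8:ℝ) = 2 ^ (3:ℕ) by norm_num,
      ← Real.rpow_natCast (2:ℝ) 6, ← Real.rpow_natCast (2:ℝ) 3,
      ← Real.rpow_add two_pos, ← Real.rpow_add two_pos]
    congr 1
    push_cast
    ring
  rw [hkey, Real.rpow_add two_pos]
  ring
/- ### Representation of the autocorrelation -/

lemma conv_repr2 (g : ℤ → ℝ) (x : ℤ) :
    zconvR (zreflR g) g x = ∑' m : ℤ, g m * g (x + m) := by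
  unfold zconvR zreflR
  rw [← (Equiv.neg ℤ).tsum_eq (fun n => g (-n) * g (x - n))]
  congr 1
  funext m
  simp [sub_neg_eq_add]

lemma conv_neg (g : ℤ → ℝ) (x : ℤ) :
    zconvR (zreflR g) g (-x) = zconvR (zreflR g) g x := by
  rw [conv_repr2, conv_repr2]
  rw [← (Equiv.addLeft x).tsum_eq (fun m => g m * g (-x + m))]
  congr 1
  funext m
  simp only [Equiv.coe_addLeft]
  rw [mul_comm]
  congr 2
  ring

lemma conv_repr {Ω : Type} (X : ℕ → Ω → ℝ) (ω : Ω) (i : ℕ) (x : ℕ) (hx : 0 < x) :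
    zconvR (zreflR (randMu X i ω)) (randMu X i ω) (x : ℤ)
      = ∑ m ∈ Ix i x, coefR x m * (X m ω * X (m + x) ω) := by
  classical
  rw [conv_repr2]
  set g := randMu X i ω with hg
  set T : Finset ℤ := Finset.image (Nat.cast : ℕ → ℤ) (Ix i x) with hTdef
  have hsupp : ∀ b : ℤ, b ∉ T → g b * g ((x : ℤ) + b) = 0 := by
    intro b hb
    by_contra hne
    have hgb : g b ≠ 0 := fun h => hne (by rw [h, zero_mul])
    have hgxb : g ((x : ℤ) + b) ≠ 0 := fun h => hne (by rw [h, mul_zero])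
    rw [hg, randMu] at hgb hgxb
    have h1 : (2 : ℤ) ^ (i - 1) < b ∧ b ≤ 2 ^ i := by
      by_contra h; exact hgb (if_neg h)
    have h2 : (2 : ℤ) ^ (i - 1) < (x : ℤ) + b ∧ (x : ℤ) + b ≤ 2 ^ i := by
      by_contra h; exact hgxb (if_neg h)
    apply hb
    rw [hTdef]
    have hbpos : 0 < b := lt_of_le_of_lt (by positivity) h1.1
    refine Finset.mem_image.2 ⟨b.toNat, ?_, by simp [Int.toNat_of_nonneg hbpos.le]⟩
    rw [Ix, Finset.mem_filter, Finset.mem_Ioc]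
    refine ⟨⟨?_, ?_⟩, ?_⟩
    · have := h1.1
      zify
      rwa [Int.toNat_of_nonneg hbpos.le]
    · have := h1.2
      zify
      rwa [Int.toNat_of_nonneg hbpos.le]
    · have := h2.2
      zify
      rw [Int.toNat_of_nonneg hbpos.le]
      linarith
  rw [tsum_eq_sum hsupp, hTdef, Finset.sum_image (fun a _ b _ h => Nat.cast_injective h)]
  apply Finset.sum_congr rfl
  intro m hm
  rw [Ix, Finset.mem_filter, Finset.mem_Ioc] at hm
  obtain ⟨⟨hm1, hm2⟩, hm3⟩ := hm
  have hc1 : (2 : ℤ) ^ (i - 1) < (m : ℤ) ∧ (m : ℤ) ≤ 2 ^ i := by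
    constructor <;> [exact_mod_cast hm1; exact_mod_cast hm2]
  have hc2 : (2 : ℤ) ^ (i - 1) < (x : ℤ) + (m : ℤ) ∧ (x : ℤ) + (m : ℤ) ≤ 2 ^ i := by
    constructor
    · have : (0:ℤ) ≤ (x:ℤ) := by positivity
      linarith [hc1.1]
    · have : (x : ℤ) + m = ((m + x : ℕ) : ℤ) := by push_cast; ring
      rw [this]
      exact_mod_cast hm3
  simp only [hg, randMu, if_pos hc1, if_pos hc2]
  have e1 : ((m : ℤ)).toNat = m := Int.toNat_natCast m
  have e2 : ((x : ℤ) + (m : ℤ)).toNat = m + x := by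
    rw [show (x : ℤ) + (m : ℤ) = ((m + x : ℕ) : ℤ) by push_cast; ring, Int.toNat_natCast]
  rw [e1, e2, coefR]
  push_cast
  rw [div_mul_div_comm, one_div_mul_eq_div]
  ring_nf
/- ### Probabilistic estimates -/

lemma exp_mul_le (t y : ℝ) (hy : |y| ≤ 1) :
    Real.exp (t * y) ≤ Real.cosh t + y * Real.sinh t := by
  have h1 : (0:ℝ) ≤ (1 + y) / 2 := by cases' abs_le.1 hy with h _; linarith
  have h2 : (0:ℝ) ≤ (1 - y) / 2 := by cases' abs_le.1 hy with _ h; linarith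
  have hsum : (1 + y) / 2 + (1 - y) / 2 = 1 := by ring
  have := convexOn_exp.2 (Set.mem_univ t) (Set.mem_univ (-t)) h1 h2 hsum
  simp only [smul_eq_mul] at this
  have harg : (1 + y) / 2 * t + (1 - y) / 2 * (-t) = t * y := by ring
  rw [harg] at this
  calc Real.exp (t * y) ≤ (1 + y) / 2 * Real.exp t + (1 - y) / 2 * Real.exp (-t) := this
    _ = Real.cosh t + y * Real.sinh t := by rw [Real.cosh_eq, Real.sinh_eq]; ring

lemma mgf_single {Ω : Type} [MeasurableSpace Ω] (μ : Measure Ω) [IsProbabilityMeasure μ]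
    (Y : Ω → ℝ) (hm : AEStronglyMeasurable Y μ) (hb : ∀ᵐ ω ∂μ, |Y ω| ≤ 1)
    (h0 : ∫ ω, Y ω ∂μ = 0) (t : ℝ) :
    ∫ ω, Real.exp (t * Y ω) ∂μ ≤ Real.exp (t ^ 2 / 2) := by
  have hYint : Integrable Y μ := by
    refine (integrable_const (1:ℝ)).mono' hm ?_
    filter_upwards [hb] with ω h using by simpa [Real.norm_eq_abs] using h
  have hint : Integrable (fun ω => Real.exp (t * Y ω)) μ := by
    refine (integrable_const (Real.exp |t|)).mono'
      (Real.continuous_exp.comp_aestronglyMeasurable (hm.const_mul t)) ?_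
    filter_upwards [hb] with ω h
    rw [Real.norm_eq_abs, abs_of_pos (Real.exp_pos _)]
    exact Real.exp_le_exp.2 (le_trans (le_abs_self _) (by
      rw [abs_mul]; nlinarith [abs_nonneg t, abs_nonneg (Y ω)]))
  have hmono : ∫ ω, Real.exp (t * Y ω) ∂μ ≤ ∫ ω, (Real.cosh t + Y ω * Real.sinh t) ∂μ := by
    refine integral_mono_ae hint ?_ ?_
    · exact (integrable_const _).add (hYint.mul_const _)
    · filter_upwards [hb] with ω h using exp_mul_le t (Y ω) h
  have heq : ∫ ω, (Real.cosh t + Y ω * Real.sinh t) ∂μ = Real.cosh t := by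
    rw [integral_add (integrable_const _) (hYint.mul_const _), integral_const,
      integral_mul_const, h0]
    simp
  rw [heq] at hmono
  exact hmono.trans (Real.cosh_le_exp_half_sq t)

lemma prod_integral_blocks {Ω : Type} [MeasurableSpace Ω] (μ : Measure Ω) [IsProbabilityMeasure μ]
    (X : ℕ → Ω → ℝ) (hind : iIndepFun X μ)
    (hmeas : ∀ n, Measurable (X n)) (x : ℕ) (c : ℕ → ℝ) (F : Finset ℕ)
    (hdis : ∀ m ∈ F, ∀ m' ∈ F, m ≠ m' → m' ≠ m + x ∧ m ≠ m' + x) :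
    ∫ ω, ∏ m ∈ F, Real.exp (c m * (X m ω * X (m + x) ω)) ∂μ
      = ∏ m ∈ F, ∫ ω, Real.exp (c m * (X m ω * X (m + x) ω)) ∂μ := by
  classical
  induction F using Finset.induction_on with
  | empty => simp
  | @insert k s hk ih =>
    have hdis' : ∀ m ∈ s, ∀ m' ∈ s, m ≠ m' → m' ≠ m + x ∧ m ≠ m' + x := fun m hm m' hm' h =>
      hdis m (Finset.mem_insert_of_mem hm) m' (Finset.mem_insert_of_mem hm') h
    set T : Finset ℕ := s.biUnion (fun m => ({m, m + x} : Finset ℕ)) with hT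
    have hdisjT : Disjoint ({k, k + x} : Finset ℕ) T := by
      rw [Finset.disjoint_left]
      intro a ha haT
      rcases Finset.mem_biUnion.1 haT with ⟨m, hm, ham⟩
      have hkm : k ≠ m := fun h => hk (h ▸ hm)
      have h1 := hdis m (Finset.mem_insert_of_mem hm) k (Finset.mem_insert_self _ _) (Ne.symm hkm)
      simp only [Finset.mem_insert, Finset.mem_singleton] at ha ham
      rcases ha with rfl | rfl
      · rcases ham with h2 | h2
        · exact hkm h2
        · exact h1.1 h2
      · rcases ham with h2 | h2
        · exact h1.2 h2.symm
        · exact hkm (Nat.add_right_cancel h2)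
    have hIF := hind.indepFun_finset ({k, k + x} : Finset ℕ) T hdisjT hmeas
    have hkmem : k ∈ ({k, k + x} : Finset ℕ) := by simp
    have hkxmem : k + x ∈ ({k, k + x} : Finset ℕ) := by simp
    have pf1 : ∀ m : {y // y ∈ s}, (m : ℕ) ∈ T :=
      fun m => Finset.mem_biUnion.2 ⟨m.1, m.2, by simp⟩
    have pf2 : ∀ m : {y // y ∈ s}, (m : ℕ) + x ∈ T :=
      fun m => Finset.mem_biUnion.2 ⟨m.1, m.2, by simp⟩
    set g₁ : ({j // j ∈ ({k, k + x} : Finset ℕ)} → ℝ) → ℝ :=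
      fun v => Real.exp (c k * (v ⟨k, hkmem⟩ * v ⟨k + x, hkxmem⟩)) with hg₁def
    set g₂ : ({j // j ∈ T} → ℝ) → ℝ :=
      fun v => ∏ m ∈ s.attach, Real.exp (c m * (v ⟨m, pf1 m⟩ * v ⟨m + x, pf2 m⟩)) with hg₂def
    have hg₁ : Measurable g₁ := by
      apply Real.measurable_exp.comp
      apply Measurable.const_mul
      exact (measurable_pi_apply _).mul (measurable_pi_apply _)
    have hg₂ : Measurable g₂ := by
      refine Finset.measurable_prod _ fun m _ => ?_
      apply Real.measurable_exp.comp
      apply Measurable.const_mul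
      exact (measurable_pi_apply _).mul (measurable_pi_apply _)
    have hI2 := hIF.comp hg₁ hg₂
    simp only [Function.comp_def] at hI2
    have he1 : (fun ω => g₁ (fun j : {j // j ∈ ({k, k + x} : Finset ℕ)} => X j ω))
        = fun ω => Real.exp (c k * (X k ω * X (k + x) ω)) := rfl
    have he2 : (fun ω => g₂ (fun j : {j // j ∈ T} => X j ω))
        = fun ω => ∏ m ∈ s, Real.exp (c m * (X m ω * X (m + x) ω)) := by
      funext ω
      simp only [hg₂def]
      exact Finset.prod_attach s (fun m => Real.exp (c m * (X m ω * X (m + x) ω)))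
    rw [he1, he2] at hI2
    have haesm1 : AEStronglyMeasurable (fun ω => Real.exp (c k * (X k ω * X (k + x) ω))) μ :=
      (Real.measurable_exp.comp (((hmeas k).mul (hmeas (k + x))).const_mul _)).aestronglyMeasurable
    have haesm2 : AEStronglyMeasurable
        (fun ω => ∏ m ∈ s, Real.exp (c m * (X m ω * X (m + x) ω))) μ := by
      refine (Finset.measurable_prod _ fun m _ => ?_).aestronglyMeasurable
      exact Real.measurable_exp.comp (((hmeas m).mul (hmeas (m + x))).const_mul _)
    calc ∫ ω, ∏ m ∈ insert k s, Real.exp (c m * (X m ω * X (m + x) ω)) ∂μ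
        = ∫ ω, (Real.exp (c k * (X k ω * X (k + x) ω))
            * ∏ m ∈ s, Real.exp (c m * (X m ω * X (m + x) ω))) ∂μ := by
          simp_rw [Finset.prod_insert hk]
      _ = (∫ ω, Real.exp (c k * (X k ω * X (k + x) ω)) ∂μ)
            * ∫ ω, ∏ m ∈ s, Real.exp (c m * (X m ω * X (m + x) ω)) ∂μ :=
          hI2.integral_mul_eq_mul_integral haesm1 haesm2
      _ = ∏ m ∈ insert k s, ∫ ω, Real.exp (c m * (X m ω * X (m + x) ω)) ∂μ := by
          rw [Finset.prod_insert hk, ih hdis']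

lemma tail_bound {Ω : Type} [MeasurableSpace Ω] (μ : Measure Ω) [IsProbabilityMeasure μ]
    (X : ℕ → Ω → ℝ) (hind : iIndepFun X μ)
    (hmeas : ∀ n, Measurable (X n)) (hmean : ∀ n, ∫ ω, X n ω ∂μ = 0)
    (hbdd : ∀ n, ∀ᵐ ω ∂μ, |X n ω| ≤ 1)
    (x : ℕ) (hx : 0 < x) (c : ℕ → ℝ) (F : Finset ℕ)
    (hdis : ∀ m ∈ F, ∀ m' ∈ F, m ≠ m' → m' ≠ m + x ∧ m ≠ m' + x)
    (t σ2 : ℝ) (ht : 0 < t) (hσ : 0 < σ2) (hc : ∑ m ∈ F, (c m) ^ 2 ≤ σ2) :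
    μ {ω | t ≤ ∑ m ∈ F, c m * (X m ω * X (m + x) ω)}
      ≤ ENNReal.ofReal (Real.exp (-(t ^ 2) / (2 * σ2))) := by
  classical
  set S : Ω → ℝ := fun ω => ∑ m ∈ F, c m * (X m ω * X (m + x) ω) with hS
  set l : ℝ := t / σ2 with hl
  have hl0 : 0 < l := div_pos ht hσ
  have hSmeas : Measurable S := by
    refine Finset.measurable_sum _ fun m _ => ?_
    exact ((hmeas m).mul (hmeas (m + x))).const_mul _
  have hbddS : ∀ᵐ ω ∂μ, |S ω| ≤ ∑ m ∈ F, |c m| := by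
    have h := ae_all_iff.2 hbdd
    filter_upwards [h] with ω hω
    refine (Finset.abs_sum_le_sum_abs _ _).trans (Finset.sum_le_sum fun m _ => ?_)
    rw [abs_mul, abs_mul]
    calc |c m| * (|X m ω| * |X (m + x) ω|) ≤ |c m| * (1 * 1) := by
          apply mul_le_mul_of_nonneg_left _ (abs_nonneg _)
          exact mul_le_mul (hω m) (hω (m + x)) (abs_nonneg _) zero_le_one
      _ = |c m| := by ring
  have hint : Integrable (fun ω => Real.exp (l * S ω)) μ := by
    refine (integrable_const (Real.exp (l * ∑ m ∈ F, |c m|))).mono'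
      (Real.continuous_exp.comp_aestronglyMeasurable
        (hSmeas.aestronglyMeasurable.const_mul l)) ?_
    filter_upwards [hbddS] with ω h
    rw [Real.norm_eq_abs, abs_of_pos (Real.exp_pos _)]
    exact Real.exp_le_exp.2 (mul_le_mul_of_nonneg_left ((le_abs_self _).trans h) hl0.le)
  have hmgf : mgf S μ l ≤ Real.exp (l ^ 2 * σ2 / 2) := by
    have h1 : mgf S μ l = ∫ ω, ∏ m ∈ F, Real.exp ((l * c m) * (X m ω * X (m + x) ω)) ∂μ := by
      unfold mgf
      congr 1
      funext ω
      show Real.exp (l * ∑ m ∈ F, c m * (X m ω * X (m + x) ω)) = _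
      rw [Finset.mul_sum, Real.exp_sum]
      congr 1; funext m; ring_nf
    rw [h1, prod_integral_blocks μ X hind hmeas x _ F hdis]
    have h2 : ∀ m ∈ F, ∫ ω, Real.exp ((l * c m) * (X m ω * X (m + x) ω)) ∂μ
        ≤ Real.exp ((l * c m) ^ 2 / 2) := by
      intro m _
      refine mgf_single μ _ (((hmeas m).mul (hmeas (m + x))).aestronglyMeasurable) ?_ ?_ _
      · filter_upwards [hbdd m, hbdd (m + x)] with ω h1 h2
        rw [Pi.mul_apply, abs_mul]
        exact mul_le_one₀ h1 (abs_nonneg _) h2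
      · have hne : m ≠ m + x := by omega
        have hIM := (hind.indepFun hne).integral_mul_eq_mul_integral (hmeas m).aestronglyMeasurable
          (hmeas (m + x)).aestronglyMeasurable
        calc ∫ ω, X m ω * X (m + x) ω ∂μ = ∫ ω, (X m * X (m + x)) ω ∂μ := rfl
          _ = (∫ ω, X m ω ∂μ) * ∫ ω, X (m + x) ω ∂μ := hIM
          _ = 0 := by rw [hmean m]; ring
    calc ∏ m ∈ F, ∫ ω, Real.exp ((l * c m) * (X m ω * X (m + x) ω)) ∂μ
        ≤ ∏ m ∈ F, Real.exp ((l * c m) ^ 2 / 2) := by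
          refine Finset.prod_le_prod (fun m _ => ?_) h2
          exact integral_nonneg fun ω => (Real.exp_pos _).le
      _ = Real.exp (∑ m ∈ F, (l * c m) ^ 2 / 2) := by rw [Real.exp_sum]
      _ ≤ Real.exp (l ^ 2 * σ2 / 2) := by
          apply Real.exp_le_exp.2
          rw [← Finset.sum_div]
          have hkey : ∑ m ∈ F, (l * c m) ^ 2 ≤ l ^ 2 * σ2 := by
            calc ∑ m ∈ F, (l * c m) ^ 2 = l ^ 2 * ∑ m ∈ F, (c m) ^ 2 := by
                  rw [Finset.mul_sum]; congr 1; funext m; ring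
              _ ≤ l ^ 2 * σ2 := mul_le_mul_of_nonneg_left hc (sq_nonneg _)
          linarith
  have hcher := measure_ge_le_exp_mul_mgf (μ := μ) (X := S) t hl0.le hint
  have hfinal : (μ {ω | t ≤ S ω}).toReal ≤ Real.exp (-(t ^ 2) / (2 * σ2)) := by
    refine hcher.trans ?_
    calc Real.exp (-l * t) * mgf S μ l ≤ Real.exp (-l * t) * Real.exp (l ^ 2 * σ2 / 2) :=
          mul_le_mul_of_nonneg_left hmgf (Real.exp_pos _).le
      _ = Real.exp (-l * t + l ^ 2 * σ2 / 2) := by rw [← Real.exp_add]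
      _ = Real.exp (-(t ^ 2) / (2 * σ2)) := by
          congr 1
          rw [hl]
          field_simp
          ring
  have hfin := ENNReal.ofReal_le_ofReal hfinal
  rwa [ENNReal.ofReal_toReal (measure_ne_top μ _)] at hfin
lemma class_bound {Ω : Type} [MeasurableSpace Ω] (μ : Measure Ω) [IsProbabilityMeasure μ]
    (X : ℕ → Ω → ℝ) (hind : iIndepFun X μ)
    (hmeas : ∀ n, Measurable (X n)) (hmean : ∀ n, ∫ ω, X n ω ∂μ = 0)
    (hbdd : ∀ n, ∀ᵐ ω ∂μ, |X n ω| ≤ 1) (i x cl : ℕ) (hi : 1 ≤ i) (hx : 0 < x) :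
    μ {ω | thr i ≤ |Scl X i x cl ω|}
      ≤ 2 * ENNReal.ofReal (Real.exp (-((2 : ℝ) ^ ((i : ℝ) / 2) / 64))) := by
  set σ2 : ℝ := (2 : ℝ) ^ (3 - 3 * (i : ℝ)) with hσ2
  have hσ : 0 < σ2 := Real.rpow_pos_of_pos two_pos _
  have hdis := IxC_disjointPairs (i := i) (cl := cl) hx
  have h1 := tail_bound μ X hind hmeas hmean hbdd x hx (coefR x) (IxC i x cl) hdis
    (thr i) σ2 (thr_pos i) hσ (sum_sq_le i x cl hi)
  have h2 := tail_bound μ X hind hmeas hmean hbdd x hx (fun m => -coefR x m) (IxC i x cl) hdis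
    (thr i) σ2 (thr_pos i) hσ (by simpa [neg_sq] using sum_sq_le i x cl hi)
  have hneg : ∀ ω : Ω, ∑ m ∈ IxC i x cl, -coefR x m * (X m ω * X (m + x) ω)
      = -Scl X i x cl ω := by
    intro ω
    rw [Scl, ← Finset.sum_neg_distrib]
    apply Finset.sum_congr rfl
    intro m _
    ring
  have hsub : {ω : Ω | thr i ≤ |Scl X i x cl ω|}
      ⊆ {ω | thr i ≤ Scl X i x cl ω} ∪ {ω | thr i ≤ -Scl X i x cl ω} := by
    intro ω h
    simp only [Set.mem_setOf_eq] at h ⊢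
    rcases le_abs.1 h with h' | h'
    · exact Or.inl h'
    · exact Or.inr h'
  have hEident : -(thr i ^ 2) / (2 * σ2) = -((2 : ℝ) ^ ((i : ℝ) / 2) / 64) := exp_ident i
  calc μ {ω | thr i ≤ |Scl X i x cl ω|}
      ≤ μ ({ω | thr i ≤ Scl X i x cl ω} ∪ {ω | thr i ≤ -Scl X i x cl ω}) :=
        measure_mono hsub
    _ ≤ μ {ω | thr i ≤ Scl X i x cl ω} + μ {ω | thr i ≤ -Scl X i x cl ω} := measure_union_le _ _
    _ ≤ ENNReal.ofReal (Real.exp (-((2:ℝ) ^ ((i:ℝ)/2) / 64)))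
        + ENNReal.ofReal (Real.exp (-((2:ℝ) ^ ((i:ℝ)/2) / 64))) := by
        gcongr
        · have h1' := h1
          rw [hEident] at h1'
          exact h1'
        · have h2' := h2
          rw [hEident] at h2'
          have hseteq : {ω : Ω | thr i ≤ -Scl X i x cl ω}
              = {ω | thr i ≤ ∑ m ∈ IxC i x cl, -coefR x m * (X m ω * X (m + x) ω)} := by
            ext ω
            simp only [Set.mem_setOf_eq, hneg ω]
          rw [hseteq]
          simpa using h2'
    _ = 2 * ENNReal.ofReal (Real.exp (-((2:ℝ) ^ ((i:ℝ)/2) / 64))) := (two_mul _).symm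

lemma bad_bound {Ω : Type} [MeasurableSpace Ω] (μ : Measure Ω) [IsProbabilityMeasure μ]
    (X : ℕ → Ω → ℝ) (hind : iIndepFun X μ)
    (hmeas : ∀ n, Measurable (X n)) (hmean : ∀ n, ∫ ω, X n ω ∂μ = 0)
    (hbdd : ∀ n, ∀ᵐ ω ∂μ, |X n ω| ≤ 1) (i : ℕ) (hi : 1 ≤ i) :
    μ (badSet X i)
      ≤ ENNReal.ofReal ((2:ℝ) ^ i * 4 * Real.exp (-((2 : ℝ) ^ ((i : ℝ) / 2) / 64))) := by
  set e : ENNReal := ENNReal.ofReal (Real.exp (-((2 : ℝ) ^ ((i : ℝ) / 2) / 64))) with he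
  calc μ (badSet X i)
      ≤ ∑ x ∈ Finset.Icc 1 (2 ^ i), μ (⋃ cl ∈ Finset.range 2, {ω | thr i ≤ |Scl X i x cl ω|}) :=
        measure_biUnion_finset_le _ _
    _ ≤ ∑ x ∈ Finset.Icc 1 (2 ^ i), ∑ cl ∈ Finset.range 2, μ {ω | thr i ≤ |Scl X i x cl ω|} := by
        gcongr with x hx
        exact measure_biUnion_finset_le _ _
    _ ≤ ∑ x ∈ Finset.Icc 1 (2 ^ i), ∑ _cl ∈ Finset.range 2, 2 * e := by
        gcongr with x hx cl hcl
        rw [Finset.mem_Icc] at hx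
        exact class_bound μ X hind hmeas hmean hbdd i x cl hi (by omega)
    _ = (2 ^ i : ℕ) * (2 * (2 * e)) := by
        rw [Finset.sum_const, Finset.sum_const, Finset.card_range, Nat.card_Icc]
        simp [mul_comm, mul_assoc, mul_left_comm]
    _ = ENNReal.ofReal ((2:ℝ) ^ i * 4 * Real.exp (-((2 : ℝ) ^ ((i : ℝ) / 2) / 64))) := by
        rw [he, ← ENNReal.ofReal_natCast (2 ^ i), ← ENNReal.ofReal_ofNat 2,
          ← ENNReal.ofReal_mul (by norm_num), ← ENNReal.ofReal_mul (by norm_num),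
          ← ENNReal.ofReal_mul (by positivity)]
        congr 1
        push_cast
        ring
lemma real_decay (i : ℕ) :
    (2:ℝ) ^ (i:ℕ) * 4 * Real.exp (-((2:ℝ) ^ ((i:ℝ)/2) / 64))
      ≤ (4 * 512 ^ 8) * (1/2 : ℝ) ^ i := by
  set z : ℝ := (2:ℝ) ^ ((i:ℝ)/2) / 64 with hz
  have hrp : (0:ℝ) < (2:ℝ) ^ ((i:ℝ)/2) := Real.rpow_pos_of_pos two_pos _
  have hz0 : 0 < z := by rw [hz]; positivity
  have h8 : z/8 ≤ Real.exp (z/8) := by linarith [Real.add_one_le_exp (z/8)]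
  have hpow : (z/8) ^ (8:ℕ) ≤ Real.exp z := by
    have h1 : (z/8) ^ (8:ℕ) ≤ (Real.exp (z/8)) ^ (8:ℕ) := pow_le_pow_left₀ (by positivity) h8 8
    have h2 : (Real.exp (z/8)) ^ (8:ℕ) = Real.exp z := by
      rw [← Real.exp_nat_mul]
      congr 1
      ring
    rw [h2] at h1
    exact h1
  have hexp : Real.exp (-z) ≤ ((z/8) ^ (8:ℕ))⁻¹ := by
    rw [Real.exp_neg]
    exact inv_anti₀ (by positivity) hpow
  have hzval : (z/8) ^ (8:ℕ) = (16:ℝ) ^ i / 512 ^ 8 := by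
    have hz8 : z/8 = (2:ℝ) ^ ((i:ℝ)/2) / 512 := by rw [hz]; ring
    rw [hz8, div_pow]
    congr 1
    rw [← Real.rpow_natCast ((2:ℝ) ^ ((i:ℝ)/2)) 8, ← Real.rpow_mul (by norm_num),
      show (i:ℝ)/2 * ((8:ℕ):ℝ) = ((4*i : ℕ):ℝ) by push_cast; ring, Real.rpow_natCast, pow_mul]
    norm_num
  calc (2:ℝ) ^ (i:ℕ) * 4 * Real.exp (-z)
      ≤ (2:ℝ) ^ (i:ℕ) * 4 * ((z/8) ^ (8:ℕ))⁻¹ :=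
        mul_le_mul_of_nonneg_left hexp (by positivity)
    _ = 2 ^ i * 4 * (512 ^ 8 / 16 ^ i) := by rw [hzval, inv_div]
    _ = 4 * 512 ^ 8 * ((2:ℝ) ^ i / 16 ^ i) := by ring
    _ = 4 * 512 ^ 8 * (1/8 : ℝ) ^ i := by
        rw [← div_pow]
        norm_num
    _ ≤ 4 * 512 ^ 8 * (1/2 : ℝ) ^ i := by
        apply mul_le_mul_of_nonneg_left _ (by norm_num)
        apply pow_le_pow_left₀ (by norm_num) (by norm_num)

lemma triv_bound {Ω : Type} (X : ℕ → Ω → ℝ) (ω : Ω) (hb1 : ∀ n, |X n ω| ≤ 1) (i x : ℕ) :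
    |∑ m ∈ Ix i x, coefR x m * (X m ω * X (m + x) ω)| ≤ (2:ℝ) ^ (i:ℕ) := by
  calc |∑ m ∈ Ix i x, coefR x m * (X m ω * X (m + x) ω)|
      ≤ ∑ m ∈ Ix i x, |coefR x m * (X m ω * X (m + x) ω)| := Finset.abs_sum_le_sum_abs _ _
    _ ≤ ∑ _m ∈ Ix i x, (1:ℝ) := by
        apply Finset.sum_le_sum
        intro m hm
        have hmm : 2 ^ (i-1) < m := by
          rw [Ix, Finset.mem_filter, Finset.mem_Ioc] at hm
          exact hm.1.1
        rw [abs_mul, abs_of_nonneg (coefR_nonneg x m), abs_mul]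
        calc coefR x m * (|X m ω| * |X (m + x) ω|) ≤ 1 * (1 * 1) := by
              apply mul_le_mul (coefR_le_one hmm) _ (by positivity) zero_le_one
              exact mul_le_mul (hb1 m) (hb1 (m+x)) (abs_nonneg _) zero_le_one
          _ = 1 := by ring
    _ = (Ix i x).card := by rw [Finset.sum_const]; simp
    _ ≤ ((2:ℕ) ^ i : ℕ) := by
        have h1 : (Ix i x).card ≤ (Finset.Ioc (2 ^ (i - 1)) (2 ^ i)).card :=
          Finset.card_le_card (Finset.filter_subset _ _)
        rw [Nat.card_Ioc] at h1
        have : (Ix i x).card ≤ 2 ^ i := h1.trans (Nat.sub_le _ _)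
        exact_mod_cast this
    _ = (2:ℝ) ^ (i:ℕ) := by push_cast; ring
/-- Almost sure autocorrelation decay for the random kernels:
a.s. there is `C_ω` with `|μ̃_i * μ_i(x)| ≤ C_ω 2^{-5i/4}` for all `i ≥ 1` and `x ≠ 0`. -/
theorem random_autocorrelation_as (Ω : Type) (_ : MeasurableSpace Ω) (μ : Measure Ω)
    [IsProbabilityMeasure μ] (X : ℕ → Ω → ℝ)
    (hind : iIndepFun X μ)
    (hmeas : ∀ n, Measurable (X n))
    (hmean : ∀ n, ∫ ω, X n ω ∂μ = 0)
    (hbdd : ∀ n, ∀ᵐ ω ∂μ, |X n ω| ≤ 1) :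
    ∀ᵐ ω ∂μ, ∃ Cω : ℝ, 0 < Cω ∧ ∀ i : ℕ, 1 ≤ i → ∀ x : ℤ, x ≠ 0 →
      |zconvR (zreflR (randMu X i ω)) (randMu X i ω) x|
        ≤ Cω * (2 : ℝ) ^ (-(5 * (i : ℝ)) / 4) := by
  have hdecay : ∀ i : ℕ, μ (badSet X i) ≤ ENNReal.ofReal ((4 * 512 ^ 8 : ℝ) * (1/2 : ℝ) ^ i) := by
    intro i
    rcases Nat.eq_zero_or_pos i with rfl | hi
    · calc μ (badSet X 0) ≤ 1 := prob_le_one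
        _ ≤ ENNReal.ofReal ((4 * 512 ^ 8 : ℝ) * (1/2 : ℝ) ^ 0) := by
            rw [ENNReal.one_le_ofReal]
            norm_num
    · exact (bad_bound μ X hind hmeas hmean hbdd i hi).trans
        (ENNReal.ofReal_le_ofReal (real_decay i))
  have hsum : (∑' i, μ (badSet X i)) ≠ ⊤ := by
    have hle := ENNReal.tsum_le_tsum hdecay
    have heq : ∀ i : ℕ, ENNReal.ofReal ((4 * 512 ^ 8 : ℝ) * (1/2 : ℝ) ^ i)
        = ENNReal.ofReal (4 * 512 ^ 8 : ℝ) * (ENNReal.ofReal (1/2 : ℝ)) ^ i := by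
      intro i
      rw [ENNReal.ofReal_mul (by norm_num), ENNReal.ofReal_pow (by norm_num)]
    simp only [heq] at hle
    rw [ENNReal.tsum_mul_left, ENNReal.tsum_geometric] at hle
    refine ne_top_of_le_ne_top ?_ hle
    refine ENNReal.mul_ne_top ENNReal.ofReal_ne_top ?_
    rw [Ne, ENNReal.inv_eq_top]
    exact (tsub_pos_of_lt (ENNReal.ofReal_lt_one.2 (by norm_num))).ne'
  have hBC := MeasureTheory.ae_eventually_notMem hsum
  filter_upwards [hBC, ae_all_iff.2 hbdd] with ω hev hb1
  obtain ⟨N₀, hN₀⟩ := Filter.eventually_atTop.1 hev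
  set N : ℕ := max N₀ 1 with hNdef
  have hCpos : (0:ℝ) < (2:ℝ) ^ (3 * (N:ℝ)) + 1 := by positivity
  refine ⟨(2:ℝ) ^ (3 * (N:ℝ)) + 1, hCpos, ?_⟩
  have hCge1 : (1:ℝ) ≤ (2:ℝ) ^ (3 * (N:ℝ)) + 1 := by
    have := Real.rpow_pos_of_pos two_pos (3 * (N:ℝ))
    linarith
  have key : ∀ i : ℕ, 1 ≤ i → ∀ y : ℤ, 0 < y →
      |zconvR (zreflR (randMu X i ω)) (randMu X i ω) y|
        ≤ ((2:ℝ) ^ (3 * (N:ℝ)) + 1) * (2:ℝ) ^ (-(5 * (i:ℝ)) / 4) := by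
    intro i hi y hy
    have hrp : (0:ℝ) < (2:ℝ) ^ (-(5 * (i:ℝ)) / 4) := Real.rpow_pos_of_pos two_pos _
    set yn : ℕ := y.toNat with hyn
    have hyn0 : 0 < yn := by omega
    have hcast : (yn : ℤ) = y := by omega
    rw [← hcast, conv_repr X ω i yn hyn0]
    by_cases hbig : 2 ^ i < yn
    · rw [Ix_empty hbig]
      simp only [Finset.sum_empty, abs_zero]
      positivity
    · push_neg at hbig
      by_cases hiN : i < N
      · have h1 := triv_bound X ω hb1 i yn
        have h2 : (2:ℝ) ^ (i:ℕ) ≤ (2:ℝ) ^ (3 * (N:ℝ)) * (2:ℝ) ^ (-(5 * (i:ℝ)) / 4) := by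
          rw [← Real.rpow_natCast 2 i, ← Real.rpow_add two_pos]
          apply (Real.rpow_le_rpow_left_iff one_lt_two).2
          have hiN' : (i:ℝ) ≤ (N:ℝ) := by exact_mod_cast hiN.le
          have hipos : (0:ℝ) ≤ (i:ℝ) := Nat.cast_nonneg i
          linarith
        calc |∑ m ∈ Ix i yn, coefR yn m * (X m ω * X (m + yn) ω)| ≤ (2:ℝ) ^ (i:ℕ) := h1
          _ ≤ (2:ℝ) ^ (3 * (N:ℝ)) * (2:ℝ) ^ (-(5 * (i:ℝ)) / 4) := h2
          _ ≤ ((2:ℝ) ^ (3 * (N:ℝ)) + 1) * (2:ℝ) ^ (-(5 * (i:ℝ)) / 4) := by nlinarith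
      · push_neg at hiN
        have hgood : ω ∉ badSet X i := hN₀ i (le_trans (le_max_left _ _) hiN)
        have hxmem : yn ∈ Finset.Icc 1 (2 ^ i) := Finset.mem_Icc.2 ⟨hyn0, hbig⟩
        have hnotin : ∀ cl ∈ Finset.range 2, ¬ (thr i ≤ |Scl X i yn cl ω|) := by
          intro cl hcl hcon
          exact hgood (Set.mem_biUnion hxmem (Set.mem_biUnion hcl hcon))
        have h0 := lt_of_not_ge (hnotin 0 (by norm_num))
        have h1' := lt_of_not_ge (hnotin 1 (by norm_num))
        have hsplit := Ix_split (i := i) (x := yn)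
          (fun m => coefR yn m * (X m ω * X (m + yn) ω))
        rw [hsplit]
        have habs : |Scl X i yn 0 ω + Scl X i yn 1 ω|
            ≤ |Scl X i yn 0 ω| + |Scl X i yn 1 ω| := abs_add_le _ _
        have hthr : thr i + thr i = (2:ℝ) ^ (-(5 * (i:ℝ)) / 4) := by rw [thr]; ring
        calc |(∑ m ∈ IxC i yn 0, coefR yn m * (X m ω * X (m + yn) ω))
              + ∑ m ∈ IxC i yn 1, coefR yn m * (X m ω * X (m + yn) ω)|
            ≤ |Scl X i yn 0 ω| + |Scl X i yn 1 ω| := habs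
          _ ≤ thr i + thr i := add_le_add h0.le h1'.le
          _ = (2:ℝ) ^ (-(5 * (i:ℝ)) / 4) := hthr
          _ ≤ ((2:ℝ) ^ (3 * (N:ℝ)) + 1) * (2:ℝ) ^ (-(5 * (i:ℝ)) / 4) :=
              le_mul_of_one_le_left hrp.le hCge1
  intro i hi x hx
  rcases lt_or_gt_of_ne hx with hneg | hpos
  · have hy : (0:ℤ) < -x := by omega
    have hcna : zconvR (zreflR (randMu X i ω)) (randMu X i ω) x
        = zconvR (zreflR (randMu X i ω)) (randMu X i ω) (-x) := by
      conv_lhs => rw [show x = -(-x) by ring]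
      rw [conv_neg]
    rw [hcna]
    exact key i hi (-x) hy
  · exact key i hi x hpos
end

section
/- Let (β_u)_{u=1}^{u₀} be elements of L²(X) on a measure space, and suppose there exist s, t ≥ 1, ε > 0 and B > 0 with: (i) ∑_{u=1}^{u₀} ‖β_u‖₂² ≤ 2^{−s} B, and (ii) |⟨β_u, β_v⟩| ≤ 2^{−t − ε u} B for all 1 ≤ u < v ≤ u₀, where u₀ ≤ C 2^t and t ≤ s + c for absolute constants C, c. Then for every choice of signs σ_u ∈ {−1, 0, 1}, ‖∑_{u=1}^{u₀} σ_u β_u‖₂ ≤ C' √s · 2^{−s/2} B^{1/2} + C' 2^{−s/2} B^{1/2}. -/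
open Finset

set_option maxHeartbeats 1000000 in
/-- Almost-orthogonality summation: if `∑_u ‖β_u‖² ≤ 2^{-s} B` and
`|⟨β_u, β_v⟩| ≤ 2^{-t-εu} B` for `u < v`, with `u₀ ≤ C 2^t` and `t ≤ s + c`,
then every signed sum `∑ σ_u β_u` has norm at most
`C' √s 2^{-s/2} √B + C' 2^{-s/2} √B`. -/
theorem almost_orthogonal_sum (C c : ℝ) (hC : 0 < C) (hc : 0 ≤ c)
    (ε : ℝ) (hε : 0 < ε) :
    ∃ C' : ℝ, 0 < C' ∧
      ∀ (H : Type) (_ : NormedAddCommGroup H) (_ : InnerProductSpace ℝ H)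
        (s t u₀ : ℕ) (β : ℕ → H) (B : ℝ) (σ : ℕ → ℝ),
        1 ≤ s → 1 ≤ t → 0 < B →
        (u₀ : ℝ) ≤ C * 2 ^ t → (t : ℝ) ≤ (s : ℝ) + c →
        (∑ u ∈ Finset.Icc 1 u₀, ‖β u‖ ^ 2) ≤ (2 : ℝ) ^ (-(s : ℝ)) * B →
        (∀ u v : ℕ, 1 ≤ u → u < v → v ≤ u₀ →
          |(inner ℝ (β u) (β v) : ℝ)| ≤ (2 : ℝ) ^ (-(t : ℝ) - ε * u) * B) →
        (∀ u, σ u = -1 ∨ σ u = 0 ∨ σ u = 1) →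
        ‖∑ u ∈ Finset.Icc 1 u₀, σ u • β u‖
          ≤ C' * Real.sqrt s * (2 : ℝ) ^ (-(s : ℝ) / 2) * Real.sqrt B +
            C' * (2 : ℝ) ^ (-(s : ℝ) / 2) * Real.sqrt B := by
  have h2 : (0:ℝ) ≤ 2 := by norm_num
  refine ⟨Real.sqrt (4/ε + 1) + Real.sqrt (1 + C^2 * (2:ℝ)^c) + 1, by positivity, ?_⟩
  intro H _ _ s t u₀ β B σ hs ht hB hu₀ hts hsum hinner hσ
  set a : ℝ := Real.sqrt (4/ε + 1) with ha
  set b : ℝ := Real.sqrt (1 + C^2 * (2:ℝ)^c) with hb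
  set U : ℕ := ⌈(4*s)/ε⌉₊ with hUdef
  have hσ1 : ∀ u, |σ u| ≤ 1 := by
    intro u; rcases hσ u with h|h|h <;> simp [h]
  have hβnn : ∀ u : ℕ, (0:ℝ) ≤ ‖β u‖^2 := fun u => sq_nonneg _
  set A1 : Finset ℕ := (Icc 1 u₀).filter (fun u => u ≤ U) with hA1
  set A2 : Finset ℕ := (Icc 1 u₀).filter (fun u => ¬ u ≤ U) with hA2
  have hsplit : ∑ u ∈ Icc 1 u₀, σ u • β u
      = (∑ u ∈ A1, σ u • β u) + ∑ u ∈ A2, σ u • β u :=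
    (Finset.sum_filter_add_sum_filter_not _ _ _).symm
  -- sqrt of 2^{-s}
  have hsq2 : Real.sqrt ((2:ℝ)^(-(s:ℝ))) = (2:ℝ)^(-(s:ℝ)/2) := by
    rw [Real.sqrt_eq_rpow, ← Real.rpow_mul h2, mul_one_div]
  have hsqB : Real.sqrt ((2:ℝ)^(-(s:ℝ)) * B) = (2:ℝ)^(-(s:ℝ)/2) * Real.sqrt B := by
    rw [Real.sqrt_mul (by positivity), hsq2]
  -- partial sums of squares are bounded
  have hsub : ∀ (A : Finset ℕ), A ⊆ Icc 1 u₀ →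
      (∑ u ∈ A, ‖β u‖^2) ≤ (2:ℝ)^(-(s:ℝ)) * B := by
    intro A hA
    exact le_trans (Finset.sum_le_sum_of_subset_of_nonneg hA fun u _ _ => hβnn u) hsum
  -- Part 1 : Cauchy-Schwarz
  have hcard1 : (A1.card : ℝ) ≤ (4/ε + 1) * s := by
    have h1 : A1 ⊆ Icc 1 U := by
      intro u hu
      simp only [hA1, Finset.mem_filter, Finset.mem_Icc] at hu ⊢
      exact ⟨hu.1.1, hu.2⟩
    have h2' : A1.card ≤ U := by
      simpa using Finset.card_le_card h1
    have h3 : (U : ℝ) ≤ 4*s/ε + 1 := le_of_lt (Nat.ceil_lt_add_one (by positivity))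
    have h4 : (4:ℝ)*s/ε + 1 ≤ (4/ε + 1) * s := by
      have hs1 : (1:ℝ) ≤ s := by exact_mod_cast hs
      rw [add_mul, one_mul, div_mul_eq_mul_div, mul_comm (4:ℝ) (s:ℝ), ← div_mul_eq_mul_div]
      nlinarith [div_nonneg (by norm_num : (0:ℝ) ≤ 4) hε.le]
    calc (A1.card : ℝ) ≤ U := by exact_mod_cast h2'
      _ ≤ 4*s/ε + 1 := h3
      _ ≤ _ := h4
  have hpart1 : ‖∑ u ∈ A1, σ u • β u‖
      ≤ a * Real.sqrt s * (2:ℝ)^(-(s:ℝ)/2) * Real.sqrt B := by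
    calc ‖∑ u ∈ A1, σ u • β u‖ ≤ ∑ u ∈ A1, ‖σ u • β u‖ := norm_sum_le _ _
      _ ≤ ∑ u ∈ A1, 1 * ‖β u‖ := by
          refine Finset.sum_le_sum fun u _ => ?_
          rw [norm_smul]
          exact mul_le_mul_of_nonneg_right (by simpa using hσ1 u) (norm_nonneg _)
      _ ≤ Real.sqrt (∑ u ∈ A1, (1:ℝ)^2) * Real.sqrt (∑ u ∈ A1, ‖β u‖^2) :=
          Real.sum_mul_le_sqrt_mul_sqrt _ _ _
      _ ≤ Real.sqrt ((4/ε + 1) * s) * Real.sqrt ((2:ℝ)^(-(s:ℝ)) * B) := by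
          gcongr
          · simpa using hcard1
          · exact hsub A1 (Finset.filter_subset _ _)
      _ = a * Real.sqrt s * (2:ℝ)^(-(s:ℝ)/2) * Real.sqrt B := by
          rw [Real.sqrt_mul (by positivity), hsqB, ha]; ring
  -- Part 2 : expansion of the square
  set f : ℕ → H := fun u => σ u • β u with hf
  set N : ℝ := ‖∑ u ∈ A2, f u‖ with hN
  have hNnn : 0 ≤ N := norm_nonneg _
  set M : ℝ := (2:ℝ)^(-(t:ℝ) - ε * U) * B with hM
  have hMnn : 0 ≤ M := by positivity
  have hcross : ∀ u ∈ A2, ∀ v ∈ A2, u ≠ v → |(inner ℝ (f u) (f v) : ℝ)| ≤ M := by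
    intro u hu v hv huv
    simp only [hA2, Finset.mem_filter, Finset.mem_Icc, not_le] at hu hv
    have hbase : ∀ u' v' : ℕ, u' ∈ A2 → v' ∈ A2 → u' < v' →
        |(inner ℝ (β u') (β v') : ℝ)| ≤ M := by
      intro u' v' hu' hv' hlt
      simp only [hA2, Finset.mem_filter, Finset.mem_Icc, not_le] at hu' hv'
      refine le_trans (hinner u' v' hu'.1.1 hlt hv'.1.2) ?_
      rw [hM]
      gcongr
      · norm_num
      · have : (U:ℝ) ≤ u' := by exact_mod_cast hu'.2.le
        nlinarith [hε.le]
    have hββ : |(inner ℝ (β u) (β v) : ℝ)| ≤ M := by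
      rcases lt_or_gt_of_ne huv with h | h
      · exact hbase u v (by simp [hA2, Finset.mem_filter, Finset.mem_Icc]; omega)
          (by simp [hA2, Finset.mem_filter, Finset.mem_Icc]; omega) h
      · rw [real_inner_comm]
        exact hbase v u (by simp [hA2, Finset.mem_filter, Finset.mem_Icc]; omega)
          (by simp [hA2, Finset.mem_filter, Finset.mem_Icc]; omega) h
    have heq : (inner ℝ (f u) (f v) : ℝ) = σ u * σ v * (inner ℝ (β u) (β v) : ℝ) := by
      rw [hf]; simp only [real_inner_smul_left, real_inner_smul_right]; ring
    rw [heq, abs_mul, abs_mul]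
    calc |σ u| * |σ v| * |(inner ℝ (β u) (β v) : ℝ)|
        ≤ 1 * 1 * |(inner ℝ (β u) (β v) : ℝ)| := by
          refine mul_le_mul_of_nonneg_right ?_ (abs_nonneg _)
          exact mul_le_mul (hσ1 u) (hσ1 v) (abs_nonneg _) zero_le_one
      _ = |(inner ℝ (β u) (β v) : ℝ)| := by ring
      _ ≤ M := hββ
  have hcard2 : (A2.card : ℝ) ≤ u₀ := by
    have := Finset.card_le_card (Finset.filter_subset (fun u => ¬ u ≤ U) (Icc 1 u₀))
    simp only [Nat.card_Icc] at this
    exact_mod_cast le_trans this (by omega)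
  have hNsq : N^2 ≤ (2:ℝ)^(-(s:ℝ)) * B + (u₀:ℝ) * ((u₀:ℝ) * M) := by
    have hexp : N^2 = ∑ u ∈ A2, ∑ v ∈ A2, (inner ℝ (f u) (f v) : ℝ) := by
      rw [hN, ← real_inner_self_eq_norm_sq, sum_inner]
      simp_rw [inner_sum]
    rw [hexp]
    have hrow : ∀ u ∈ A2, ∑ v ∈ A2, (inner ℝ (f u) (f v) : ℝ)
        ≤ ‖β u‖^2 + (u₀:ℝ) * M := by
      intro u hu
      rw [← Finset.add_sum_erase _ _ hu]
      have h1 : (inner ℝ (f u) (f u) : ℝ) ≤ ‖β u‖^2 := by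
        have : (inner ℝ (f u) (f u) : ℝ) = σ u ^ 2 * ‖β u‖^2 := by
          rw [hf]
          simp only [real_inner_self_eq_norm_sq, norm_smul, Real.norm_eq_abs,
            mul_pow, sq_abs]
        rw [this]
        have : σ u ^ 2 ≤ 1 := by
          have := hσ1 u; nlinarith [abs_nonneg (σ u), sq_abs (σ u)]
        nlinarith [hβnn u]
      have h2' : ∑ v ∈ A2.erase u, (inner ℝ (f u) (f v) : ℝ) ≤ (u₀:ℝ) * M := by
        calc ∑ v ∈ A2.erase u, (inner ℝ (f u) (f v) : ℝ)
            ≤ ∑ v ∈ A2.erase u, M := by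
              refine Finset.sum_le_sum fun v hv => ?_
              exact le_trans (le_abs_self _)
                (hcross u hu v (Finset.mem_of_mem_erase hv) (Finset.ne_of_mem_erase hv).symm)
          _ = (A2.erase u).card * M := by rw [Finset.sum_const, nsmul_eq_mul]
          _ ≤ (u₀:ℝ) * M := by
              refine mul_le_mul_of_nonneg_right ?_ hMnn
              calc ((A2.erase u).card : ℝ) ≤ (A2.card : ℝ) := by
                    exact_mod_cast Finset.card_le_card (Finset.erase_subset _ _)
                _ ≤ u₀ := hcard2
      linarith
    calc ∑ u ∈ A2, ∑ v ∈ A2, (inner ℝ (f u) (f v) : ℝ)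
        ≤ ∑ u ∈ A2, (‖β u‖^2 + (u₀:ℝ) * M) := Finset.sum_le_sum hrow
      _ = (∑ u ∈ A2, ‖β u‖^2) + A2.card * ((u₀:ℝ) * M) := by
          rw [Finset.sum_add_distrib, Finset.sum_const, nsmul_eq_mul]
      _ ≤ (2:ℝ)^(-(s:ℝ)) * B + (u₀:ℝ) * ((u₀:ℝ) * M) := by
          have hA2sub := hsub A2 (Finset.filter_subset _ _)
          have := mul_le_mul_of_nonneg_right hcard2 (mul_nonneg (Nat.cast_nonneg u₀) hMnn)
          linarith
  -- bound u₀² M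
  have hkey : (u₀:ℝ) * ((u₀:ℝ) * M) ≤ C^2 * (2:ℝ)^c * ((2:ℝ)^(-(s:ℝ)) * B) := by
    have hεU : (4:ℝ) * s ≤ ε * U := by
      have := Nat.le_ceil ((4*s)/ε)
      rw [← hUdef] at this
      calc (4:ℝ)*s = ε * ((4*s)/ε) := by field_simp
        _ ≤ ε * U := by exact mul_le_mul_of_nonneg_left this hε.le
    have h2t : ((2:ℝ)^t : ℝ) = (2:ℝ)^(t:ℝ) := by
      rw [Real.rpow_natCast]
    have hu0nn : (0:ℝ) ≤ (u₀:ℝ) := Nat.cast_nonneg _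
    have hC2t : (0:ℝ) ≤ C * 2^t := le_trans hu0nn hu₀
    calc (u₀:ℝ) * ((u₀:ℝ) * M)
        ≤ (C * 2^t) * ((C * 2^t) * M) := by gcongr
      _ = C^2 * ((2:ℝ)^(t:ℝ) * (2:ℝ)^(t:ℝ) * (2:ℝ)^(-(t:ℝ) - ε*U)) * B := by
          rw [hM, h2t]; ring
      _ = C^2 * (2:ℝ)^((t:ℝ) - ε*U) * B := by
          rw [← Real.rpow_add (by norm_num), ← Real.rpow_add (by norm_num)]
          ring_nf
      _ ≤ C^2 * (2:ℝ)^(c - (s:ℝ)) * B := by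
          have hs1 : (1:ℝ) ≤ s := by exact_mod_cast hs
          have hexp2 : (t:ℝ) - ε*U ≤ c - s := by linarith
          have h' := Real.rpow_le_rpow_of_exponent_le (by norm_num : (1:ℝ) ≤ 2) hexp2
          exact mul_le_mul_of_nonneg_right (mul_le_mul_of_nonneg_left h' (sq_nonneg C)) hB.le
      _ = C^2 * (2:ℝ)^c * ((2:ℝ)^(-(s:ℝ)) * B) := by
          rw [sub_eq_add_neg, Real.rpow_add (by norm_num)]; ring
  have hNsq' : N^2 ≤ (1 + C^2 * (2:ℝ)^c) * ((2:ℝ)^(-(s:ℝ)) * B) := by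
    nlinarith [hNsq, hkey]
  have hpart2 : N ≤ b * (2:ℝ)^(-(s:ℝ)/2) * Real.sqrt B := by
    have : N ≤ Real.sqrt ((1 + C^2 * (2:ℝ)^c) * ((2:ℝ)^(-(s:ℝ)) * B)) := by
      rw [← Real.sqrt_sq hNnn]
      exact Real.sqrt_le_sqrt hNsq'
    refine le_trans this ?_
    rw [Real.sqrt_mul (by positivity), hsqB, hb, mul_assoc]
  -- conclusion
  rw [hsplit]
  refine le_trans (norm_add_le _ _) ?_
  have hs1 : (1:ℝ) ≤ Real.sqrt s := by
    rw [show (1:ℝ) = Real.sqrt 1 by simp]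
    exact Real.sqrt_le_sqrt (by exact_mod_cast hs)
  have hanneg : 0 ≤ a := Real.sqrt_nonneg _
  have hbnneg : 0 ≤ b := Real.sqrt_nonneg _
  have hP : (0:ℝ) ≤ (2:ℝ)^(-(s:ℝ)/2) := by positivity
  have hQ : (0:ℝ) ≤ Real.sqrt B := Real.sqrt_nonneg _
  have h1 : a * Real.sqrt s * (2:ℝ)^(-(s:ℝ)/2) * Real.sqrt B
      ≤ (a + b + 1) * Real.sqrt s * (2:ℝ)^(-(s:ℝ)/2) * Real.sqrt B := by
    gcongr; linarith
  have h2' : b * (2:ℝ)^(-(s:ℝ)/2) * Real.sqrt B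
      ≤ (a + b + 1) * (2:ℝ)^(-(s:ℝ)/2) * Real.sqrt B := by
    gcongr; linarith
  calc ‖∑ u ∈ A1, σ u • β u‖ + ‖∑ u ∈ A2, σ u • β u‖
      ≤ a * Real.sqrt s * (2:ℝ)^(-(s:ℝ)/2) * Real.sqrt B
        + b * (2:ℝ)^(-(s:ℝ)/2) * Real.sqrt B := add_le_add hpart1 hpart2
    _ ≤ _ := add_le_add h1 h2'
end
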